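/- Let ψ be a unit vector in ℂ^d, let k ≥ 1 and a > 0, let p : Fin m → ℝ be a probability vector, and let σ_z (z ∈ Fin m) be density matrices on ℂ^d such that ∑_z p_z (1 − ⟨ψ|σ_z|ψ⟩) ≤ δ. Then (1/2)‖∑_z p_z σ_z^{⊗k} − (|ψ⟩⟨ψ|)^{⊗k}‖₁ ≤ kδ/a + k√a. -/

import Mathlib

open Matrix ComplexOrder

noncomputable def traceNorm {n : Type*} [Fintype n] [DecidableEq n]
    (A : Matrix n n ℂ) : ℝ :=
  (((Matrix.posSemidef_conjTranspose_mul_self A).1.eigenvectorUnitary.1 *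
      diagonal (((↑) : ℝ → ℂ) ∘ (√·) ∘ (Matrix.posSemidef_conjTranspose_mul_self A).1.eigenvalues) *
      (star (Matrix.posSemidef_conjTranspose_mul_self A).1.eigenvectorUnitary :
        Matrix n n ℂ)).trace).re

noncomputable def ketbra {d : ℕ} (ψ : Fin d → ℂ) : Matrix (Fin d) (Fin d) ℂ :=
  fun i j => ψ i * (starRingEnd ℂ) (ψ j)

noncomputable def kronPow {d : ℕ} (M : Matrix (Fin d) (Fin d) ℂ) (k : ℕ) :
    Matrix (Fin k → Fin d) (Fin k → Fin d) ℂ :=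
  fun i j => ∏ t : Fin k, M (i t) (j t)

noncomputable def fid {d : ℕ} (ψ : Fin d → ℂ) (σ : Matrix (Fin d) (Fin d) ℂ) : ℝ :=
  (∑ i, ∑ j, (starRingEnd ℂ) (ψ i) * σ i j * ψ j).re

namespace NC

variable {n : Type*} [Fintype n] [DecidableEq n]

lemma unit1 {A : Matrix n n ℂ} (hA : A.IsHermitian) :
    star (hA.eigenvectorUnitary : Matrix n n ℂ) * (hA.eigenvectorUnitary : Matrix n n ℂ) = 1 :=
  hA.eigenvectorUnitary.prop.1

lemma unit2 {A : Matrix n n ℂ} (hA : A.IsHermitian) :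
    (hA.eigenvectorUnitary : Matrix n n ℂ) * star (hA.eigenvectorUnitary : Matrix n n ℂ) = 1 :=
  hA.eigenvectorUnitary.prop.2

open scoped MatrixOrder in
lemma traceNorm_herm {A : Matrix n n ℂ} (hA : A.IsHermitian) :
    traceNorm A = ∑ i, |hA.eigenvalues i| := by
  classical
  set U : Matrix n n ℂ := (hA.eigenvectorUnitary : Matrix n n ℂ) with hU
  set D : Matrix n n ℂ := Matrix.diagonal (fun i => ((|hA.eigenvalues i| : ℝ) : ℂ)) with hD
  have hDpsd : D.PosSemidef := by
    refine Matrix.PosSemidef.diagonal fun i => ?_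
    exact Complex.zero_le_real.2 (abs_nonneg _)
  have hSpsd : (U * D * star U).PosSemidef := by
    have := hDpsd.mul_mul_conjTranspose_same U
    simpa [Matrix.star_eq_conjTranspose] using this
  have hsq : (U * D * star U) ^ 2 = Aᴴ * A := by
    have hAA : Aᴴ * A = A * A := by rw [hA.eq]
    have hspec := hA.spectral_theorem
    rw [hAA, pow_two]
    conv_rhs => rw [hspec]
    have : D * D = Matrix.diagonal (RCLike.ofReal ∘ hA.eigenvalues) *
        Matrix.diagonal (RCLike.ofReal ∘ hA.eigenvalues) := by
      rw [Matrix.diagonal_mul_diagonal, Matrix.diagonal_mul_diagonal]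
      refine congrArg Matrix.diagonal (funext fun i => ?_)
      simp only [Function.comp_apply]
      show ((|hA.eigenvalues i| : ℝ) : ℂ) * ((|hA.eigenvalues i| : ℝ) : ℂ)
          = ((hA.eigenvalues i : ℝ) : ℂ) * ((hA.eigenvalues i : ℝ) : ℂ)
      rw [← Complex.ofReal_mul, ← Complex.ofReal_mul, abs_mul_abs_self]
    calc U * D * star U * (U * D * star U)
        = U * (D * (star U * U) * D) * star U := by
          simp only [Matrix.mul_assoc]
      _ = U * (D * D) * star U := by rw [unit1 hA]; simp [Matrix.mul_assoc]
      _ = U * Matrix.diagonal (RCLike.ofReal ∘ hA.eigenvalues) * star U *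
          (U * Matrix.diagonal (RCLike.ofReal ∘ hA.eigenvalues) * star U) := by
          rw [this]
          calc U * (Matrix.diagonal (RCLike.ofReal ∘ hA.eigenvalues) *
              Matrix.diagonal (RCLike.ofReal ∘ hA.eigenvalues)) * star U
              = U * Matrix.diagonal (RCLike.ofReal ∘ hA.eigenvalues) *
                ((star U * U) * Matrix.diagonal (RCLike.ofReal ∘ hA.eigenvalues)) * star U := by
                rw [unit1 hA]; simp [Matrix.mul_assoc]
            _ = _ := by simp [Matrix.mul_assoc]
  have hsqrt : U * D * star U = (Matrix.posSemidef_conjTranspose_mul_self A).1.cfc Real.sqrt := by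
    have h0 : (0 : Matrix n n ℂ) ≤ Aᴴ * A :=
      nonneg_iff_posSemidef.2 (posSemidef_conjTranspose_mul_self A)
    have e := CFC.sqrt_eq_real_sqrt (Aᴴ * A) h0
    rw [cfcₙ_eq_cfc, Matrix.IsHermitian.cfc_eq (posSemidef_conjTranspose_mul_self A).1] at e
    rw [← e]
    exact (CFC.sqrt_unique (by rw [← pow_two]; exact hsq) (nonneg_iff_posSemidef.2 hSpsd)).symm
  have : traceNorm A = ((U * D * star U).trace).re := by
    rw [hsqrt, Matrix.IsHermitian.cfc, Unitary.conjStarAlgAut_apply]; rfl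
  rw [this, Matrix.trace_mul_cycle, unit1 hA, Matrix.one_mul]
  rw [hD, Matrix.trace_diagonal]
  rw [← Complex.ofReal_sum]
  exact Complex.ofReal_re _

lemma psd_diag_entry {M : Matrix n n ℂ} (hM : M.PosSemidef) (i : n) :
    0 ≤ M i i := by
  have := hM.dotProduct_mulVec_nonneg (Pi.single i 1)
  simpa [Matrix.mulVec, dotProduct, Pi.single_apply] using this

lemma traceNorm_sub_le {B C : Matrix n n ℂ} (hB : B.PosSemidef) (hC : C.PosSemidef) :
    traceNorm (B - C) ≤ (B.trace).re + (C.trace).re := by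
  classical
  have hA : (B - C).IsHermitian := hB.1.sub hC.1
  rw [traceNorm_herm hA]
  set U : Matrix n n ℂ := (hA.eigenvectorUnitary : Matrix n n ℂ) with hU
  have hdiag : star U * (B - C) * U = diagonal (RCLike.ofReal ∘ hA.eigenvalues) := by
    have h := hA.conjStarAlgAut_star_eigenvectorUnitary
    rw [Unitary.conjStarAlgAut_star_apply] at h
    exact h
  have hBU : (star U * B * U).PosSemidef := by
    have := hB.conjTranspose_mul_mul_same U
    simpa [Matrix.star_eq_conjTranspose] using this
  have hCU : (star U * C * U).PosSemidef := by
    have := hC.conjTranspose_mul_mul_same U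
    simpa [Matrix.star_eq_conjTranspose] using this
  have hsplit : star U * (B - C) * U = star U * B * U - star U * C * U := by
    rw [Matrix.mul_sub, Matrix.sub_mul]
  have hentry : ∀ i, hA.eigenvalues i
      = ((star U * B * U) i i).re - ((star U * C * U) i i).re := by
    intro i
    have h1 : (star U * (B - C) * U) i i = ((hA.eigenvalues i : ℝ) : ℂ) := by
      rw [hdiag]; simp [Matrix.diagonal_apply_eq, RCLike.ofReal_alg]
    have h2 : ((star U * B * U) i i - (star U * C * U) i i) = ((hA.eigenvalues i : ℝ) : ℂ) := by
      rw [← h1, hsplit]; simp [Matrix.sub_apply]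
    have := congrArg Complex.re h2
    simpa using this.symm
  have hle : ∀ i, |hA.eigenvalues i|
      ≤ ((star U * B * U) i i).re + ((star U * C * U) i i).re := by
    intro i
    have hb := psd_diag_entry hBU i
    have hc := psd_diag_entry hCU i
    have hbre : 0 ≤ ((star U * B * U) i i).re := (Complex.le_def.1 hb).1
    have hcre : 0 ≤ ((star U * C * U) i i).re := (Complex.le_def.1 hc).1
    rw [hentry i]
    have := abs_sub ((star U * B * U) i i).re ((star U * C * U) i i).re
    calc |((star U * B * U) i i).re - ((star U * C * U) i i).re|
        ≤ |((star U * B * U) i i).re| + |((star U * C * U) i i).re| := by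
          simpa [sub_eq_add_neg, abs_neg] using
            abs_add_le ((star U * B * U) i i).re (-((star U * C * U) i i).re)
      _ = _ := by rw [_root_.abs_of_nonneg hbre, _root_.abs_of_nonneg hcre]
  have htr : ∀ M : Matrix n n ℂ, (star U * M * U).trace = M.trace := by
    intro M
    rw [Matrix.trace_mul_cycle, unit2 hA, Matrix.one_mul]
  calc ∑ i, |hA.eigenvalues i|
      ≤ ∑ i, (((star U * B * U) i i).re + ((star U * C * U) i i).re) :=
        Finset.sum_le_sum fun i _ => hle i
    _ = ((star U * B * U).trace).re + ((star U * C * U).trace).re := by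
        rw [Finset.sum_add_distrib]
        simp [Matrix.trace, Complex.re_sum]
    _ = (B.trace).re + (C.trace).re := by rw [htr B, htr C]

lemma decomp_exists {A : Matrix n n ℂ} (hA : A.IsHermitian) :
    ∃ Pp Pn : Matrix n n ℂ, Pp.PosSemidef ∧ Pn.PosSemidef ∧ A = Pp - Pn ∧
      Pp.trace = ((∑ i, max (hA.eigenvalues i) 0 : ℝ) : ℂ) ∧
      Pn.trace = ((∑ i, max (-(hA.eigenvalues i)) 0 : ℝ) : ℂ) := by
  classical
  set U : Matrix n n ℂ := (hA.eigenvectorUnitary : Matrix n n ℂ) with hU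
  set Dp : Matrix n n ℂ := Matrix.diagonal (fun i => ((max (hA.eigenvalues i) 0 : ℝ) : ℂ)) with hDp
  set Dn : Matrix n n ℂ := Matrix.diagonal
    (fun i => ((max (-(hA.eigenvalues i)) 0 : ℝ) : ℂ)) with hDn
  refine ⟨U * Dp * star U, U * Dn * star U, ?_, ?_, ?_, ?_, ?_⟩
  · have h := (Matrix.PosSemidef.diagonal
      (fun i => Complex.zero_le_real.2 (le_max_right _ 0)) :
        (Dp).PosSemidef).mul_mul_conjTranspose_same U
    simpa [Matrix.star_eq_conjTranspose] using h
  · have h := (Matrix.PosSemidef.diagonal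
      (fun i => Complex.zero_le_real.2 (le_max_right _ 0)) :
        (Dn).PosSemidef).mul_mul_conjTranspose_same U
    simpa [Matrix.star_eq_conjTranspose] using h
  · have hsub : Dp - Dn = Matrix.diagonal (RCLike.ofReal ∘ hA.eigenvalues) := by
      rw [hDp, hDn, Matrix.diagonal_sub]
      refine congrArg Matrix.diagonal (funext fun i => ?_)
      simp only [Function.comp_apply]
      show ((max (hA.eigenvalues i) 0 : ℝ) : ℂ) - ((max (-(hA.eigenvalues i)) 0 : ℝ) : ℂ)
          = ((hA.eigenvalues i : ℝ) : ℂ)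
      rw [← Complex.ofReal_sub]
      congr 1
      rcases le_or_gt 0 (hA.eigenvalues i) with h | h
      · rw [max_eq_left h, max_eq_right (neg_nonpos.2 h)]; ring
      · rw [max_eq_right h.le, max_eq_left (neg_nonneg.2 h.le)]; ring
    rw [← Matrix.sub_mul, ← Matrix.mul_sub, hsub]
    exact hA.spectral_theorem
  · rw [Matrix.trace_mul_cycle, unit1 hA, Matrix.one_mul, hDp, Matrix.trace_diagonal,
      Complex.ofReal_sum]
  · rw [Matrix.trace_mul_cycle, unit1 hA, Matrix.one_mul, hDn, Matrix.trace_diagonal,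
      Complex.ofReal_sum]



lemma sum_two {M : Type*} [AddCommMonoid M] {d : ℕ} {i j : Fin d} (hij : i ≠ j)
    (g : Fin d → M) (h0 : ∀ s, s ≠ i → s ≠ j → g s = 0) :
    ∑ s, g s = g i + g j := by
  classical
  rw [show g i + g j = ∑ s ∈ ({i, j} : Finset (Fin d)), g s by
    rw [Finset.sum_pair hij]]
  refine (Finset.sum_subset (Finset.subset_univ _) ?_).symm
  intro s _ hs
  simp only [Finset.mem_insert, Finset.mem_singleton, not_or] at hs
  exact h0 s hs.1 hs.2

lemma scalar_core {d : ℕ} (l : Fin d → ℝ) (φ : Fin d → ℂ)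
    (H : ∀ v : Fin d → ℂ,
      0 ≤ ∑ i, l i * Complex.normSq (v i)
        + Complex.normSq (∑ i, (starRingEnd ℂ) (φ i) * v i))
    (hφ : ∑ i, Complex.normSq (φ i) = 1) (hl : ∑ i, l i = 0) :
    0 ≤ ∑ i, (-(l i)) * Complex.normSq (φ i) ∧
    (∑ i, max (-(l i)) 0) ≤ 1 ∧
    (∑ i, max (-(l i)) 0) ≤ Real.sqrt (∑ i, (-(l i)) * Complex.normSq (φ i)) := by
  classical
  have diag : ∀ i, 0 ≤ l i + Complex.normSq (φ i) := by
    intro i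
    have h := H (Pi.single i 1 : Fin d → ℂ)
    have h1 : ∑ j, l j * Complex.normSq ((Pi.single i 1 : Fin d → ℂ) j) = l i := by
      rw [Finset.sum_eq_single i]
      · simp
      · intro j _ hj; simp [Pi.single_apply, hj]
      · simp
    have h2 : (∑ j, (starRingEnd ℂ) (φ j) * (Pi.single i 1 : Fin d → ℂ) j) = (starRingEnd ℂ) (φ i) := by
      rw [Finset.sum_eq_single i]
      · simp
      · intro j _ hj; simp [Pi.single_apply, hj]
      · simp
    rw [h1, h2, Complex.normSq_conj] at h
    exact h
  have two : ∀ i j, i ≠ j → ∀ x y : ℂ,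
      0 ≤ l i * Complex.normSq x + l j * Complex.normSq y
        + Complex.normSq ((starRingEnd ℂ) (φ i) * x + (starRingEnd ℂ) (φ j) * y) := by
    intro i j hij x y
    set v : Fin d → ℂ := fun s => if s = i then x else if s = j then y else 0 with hv
    have hv1 : ∑ s, l s * Complex.normSq (v s)
        = l i * Complex.normSq x + l j * Complex.normSq y := by
      have h := sum_two hij (fun s => l s * Complex.normSq (v s))
        (by intro s hsi hsj; simp [hv, hsi, hsj])
      have e1 : v i = x := by simp [hv]
      have e2 : v j = y := by simp [hv, hij.symm]
      simpa [e1, e2] using h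
    have hv2 : (∑ s, (starRingEnd ℂ) (φ s) * v s)
        = (starRingEnd ℂ) (φ i) * x + (starRingEnd ℂ) (φ j) * y := by
      have h := sum_two hij (fun s => (starRingEnd ℂ) (φ s) * v s)
        (by intro s hsi hsj; simp [hv, hsi, hsj])
      have e1 : v i = x := by simp [hv]
      have e2 : v j = y := by simp [hv, hij.symm]
      simpa [e1, e2] using h
    have h := H v
    rw [hv1, hv2] at h
    exact h
  by_cases hneg : ∀ i, 0 ≤ l i
  · have hz : ∀ i ∈ Finset.univ, l i = 0 :=
      (Finset.sum_eq_zero_iff_of_nonneg (fun i _ => hneg i)).1 hl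
    have e1 : ∑ i, (-(l i)) * Complex.normSq (φ i) = 0 := by
      refine Finset.sum_eq_zero fun i hi => ?_
      rw [hz i hi]; ring
    have e2 : (∑ i, max (-(l i)) 0) = 0 := by
      refine Finset.sum_eq_zero fun i hi => ?_
      rw [hz i hi]; simp
    rw [e1, e2]
    exact ⟨le_refl 0, by norm_num, Real.sqrt_nonneg 0⟩
  · push_neg at hneg
    obtain ⟨i0, hi0⟩ := hneg
    set μ : ℝ := -(l i0) with hμ
    have hμpos : 0 < μ := by simp [hμ]; linarith
    have hni0 : μ ≤ Complex.normSq (φ i0) := by have := diag i0; linarith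
    have hothers : ∀ j, j ≠ i0 → 0 ≤ l j := by
      intro j hj
      by_contra hlj
      push_neg at hlj
      have h2 := two j i0 hj ((starRingEnd ℂ) (φ i0)) (-((starRingEnd ℂ) (φ j)))
      have hzero : (starRingEnd ℂ) (φ j) * (starRingEnd ℂ) (φ i0)
          + (starRingEnd ℂ) (φ i0) * (-((starRingEnd ℂ) (φ j))) = 0 := by ring
      rw [hzero] at h2
      simp only [Complex.normSq_conj, Complex.normSq_neg, Complex.normSq_zero, add_zero] at h2
      have hnn : 0 ≤ Complex.normSq (φ j) := Complex.normSq_nonneg _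
      nlinarith
    have hsumrest : ∑ j ∈ Finset.univ.erase i0, l j = μ := by
      have h := Finset.add_sum_erase Finset.univ l (Finset.mem_univ i0)
      rw [hl] at h
      linarith
    set β : ℝ := Complex.normSq (φ i0) - μ with hβdef
    have hβ : 0 ≤ β := by simp [hβdef]; linarith
    have claim : ∀ j ∈ Finset.univ.erase i0, μ * Complex.normSq (φ j) ≤ l j * β := by
      intro j hj
      have hjne : j ≠ i0 := Finset.ne_of_mem_erase hj
      have hlj : 0 ≤ l j := hothers j hjne
      set p : ℝ := l j + Complex.normSq (φ j) with hp
      have hppos : 0 ≤ p := diag j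
      rcases eq_or_lt_of_le hppos with hp0 | hp0
      · have hnφj : Complex.normSq (φ j) = 0 := by
          have := Complex.normSq_nonneg (φ j); nlinarith
        have hlj0 : l j = 0 := by nlinarith [Complex.normSq_nonneg (φ j)]
        rw [hnφj, hlj0]; simp
      · have h2 := two j i0 hjne (-(φ j * (starRingEnd ℂ) (φ i0))) ((p : ℝ) : ℂ)
        have hinner : (starRingEnd ℂ) (φ j) * (-(φ j * (starRingEnd ℂ) (φ i0)))
            + (starRingEnd ℂ) (φ i0) * ((p : ℝ) : ℂ)
            = (starRingEnd ℂ) (φ i0) * ((l j : ℝ) : ℂ) := by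
          have hc : (starRingEnd ℂ) (φ j) * (φ j) = ((Complex.normSq (φ j) : ℝ) : ℂ) := by
            rw [mul_comm]; exact Complex.mul_conj _
          have hpc : ((p : ℝ) : ℂ) = ((l j : ℝ) : ℂ) + ((Complex.normSq (φ j) : ℝ) : ℂ) := by
            rw [hp]; push_cast; ring
          calc (starRingEnd ℂ) (φ j) * (-(φ j * (starRingEnd ℂ) (φ i0)))
              + (starRingEnd ℂ) (φ i0) * ((p : ℝ) : ℂ)
              = -(((starRingEnd ℂ) (φ j) * (φ j)) * (starRingEnd ℂ) (φ i0))
              + (starRingEnd ℂ) (φ i0) * ((p : ℝ) : ℂ) := by ring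
            _ = _ := by rw [hc, hpc]; ring
        rw [hinner] at h2
        have hns1 : Complex.normSq (-(φ j * (starRingEnd ℂ) (φ i0)))
            = Complex.normSq (φ j) * Complex.normSq (φ i0) := by
          rw [Complex.normSq_neg, Complex.normSq_mul, Complex.normSq_conj]
        have hns2 : Complex.normSq (((p : ℝ) : ℂ)) = p * p := Complex.normSq_ofReal p
        have hns3 : Complex.normSq ((starRingEnd ℂ) (φ i0) * ((l j : ℝ) : ℂ))
            = Complex.normSq (φ i0) * (l j * l j) := by
          rw [Complex.normSq_mul, Complex.normSq_conj, Complex.normSq_ofReal]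
        rw [hns1, hns2, hns3] at h2
        -- h2 : 0 ≤ l j * (normSq φ j * normSq φ i0) + l i0 * (p * p) + normSq φ i0 * (l j * l j)
        -- i.e. μ * p * p ≤ normSq φ i0 * l j * p
        have hkey : μ * p ≤ Complex.normSq (φ i0) * l j := by
          have hmul : (μ * p) * p ≤ (Complex.normSq (φ i0) * l j) * p := by
            simp only [hp] at h2 ⊢
            simp only [hμ]
            nlinarith [h2]
          exact le_of_mul_le_mul_right hmul hp0
        -- μ * (l j + nφj) ≤ nφi0 * l j  ⇒  μ * nφj ≤ l j * (nφi0 - μ)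
        have : μ * (l j + Complex.normSq (φ j)) ≤ Complex.normSq (φ i0) * l j := by
          rw [← hp]; exact hkey
        simp only [hβdef]; nlinarith
    have hljμ : ∀ j ∈ Finset.univ.erase i0, l j ≤ μ := by
      intro j hj
      rw [← hsumrest]
      exact Finset.single_le_sum (fun i hi => hothers i (Finset.ne_of_mem_erase hi)) hj
    set S : ℝ := ∑ j ∈ Finset.univ.erase i0, l j * Complex.normSq (φ j) with hS
    have hSle : S ≤ μ * β := by
      have h1 : μ * S ≤ μ * β * μ := by
        rw [hS, Finset.mul_sum]
        calc ∑ j ∈ Finset.univ.erase i0, μ * (l j * Complex.normSq (φ j))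
            ≤ ∑ j ∈ Finset.univ.erase i0, μ * β * l j := by
              refine Finset.sum_le_sum fun j hj => ?_
              have hc := claim j hj
              have hlj : 0 ≤ l j := hothers j (Finset.ne_of_mem_erase hj)
              have hle := hljμ j hj
              calc μ * (l j * Complex.normSq (φ j)) = l j * (μ * Complex.normSq (φ j)) := by ring
                _ ≤ l j * (l j * β) := mul_le_mul_of_nonneg_left hc hlj
                _ ≤ l j * (μ * β) := mul_le_mul_of_nonneg_left
                    (mul_le_mul_of_nonneg_right hle hβ) hlj
                _ = μ * β * l j := by ring
          _ = μ * β * μ := by rw [← Finset.mul_sum, hsumrest]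
      nlinarith
    have hh : ∑ i, (-(l i)) * Complex.normSq (φ i) = μ * Complex.normSq (φ i0) - S := by
      have h := Finset.add_sum_erase Finset.univ (fun i => (-(l i)) * Complex.normSq (φ i))
        (Finset.mem_univ i0)
      rw [← h, hS]
      have : ∑ j ∈ Finset.univ.erase i0, -l j * Complex.normSq (φ j)
          = -∑ j ∈ Finset.univ.erase i0, l j * Complex.normSq (φ j) := by
        rw [← Finset.sum_neg_distrib]
        exact Finset.sum_congr rfl fun j _ => by ring
      rw [this]
      simp [hμ]
      ring
    have hhge : μ * μ ≤ ∑ i, (-(l i)) * Complex.normSq (φ i) := by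
      rw [hh]
      have : μ * Complex.normSq (φ i0) = μ * μ + μ * β := by rw [hβdef]; ring
      rw [this]
      linarith
    have hμsum : (∑ i, max (-(l i)) 0) = μ := by
      rw [Finset.sum_eq_single i0]
      · exact max_eq_left hμpos.le
      · intro j _ hj
        have := hothers j hj
        exact max_eq_right (by linarith)
      · simp
    refine ⟨by nlinarith, ?_, ?_⟩
    · rw [hμsum]
      calc μ ≤ Complex.normSq (φ i0) := hni0
        _ ≤ ∑ i, Complex.normSq (φ i) :=
          Finset.single_le_sum (fun i _ => Complex.normSq_nonneg _) (Finset.mem_univ i0)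
        _ = 1 := hφ
    · rw [hμsum]
      have : μ = Real.sqrt (μ * μ) := by
        rw [Real.sqrt_mul_self hμpos.le]
      rw [this]
      exact Real.sqrt_le_sqrt hhge



variable {d : ℕ}

lemma ketbra_herm (ψ : Fin d → ℂ) : (ketbra ψ).IsHermitian := by
  ext i j
  simp [ketbra, Matrix.conjTranspose_apply, mul_comm]

lemma dot_ketbra_mulVec (ψ x y : Fin d → ℂ) :
    dotProduct (star x) (ketbra ψ *ᵥ y)
      = (dotProduct (star x) ψ) * (dotProduct (star ψ) y) := by
  simp only [dotProduct, Matrix.mulVec, ketbra, Pi.star_apply, Complex.star_def,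
    Finset.sum_mul, Finset.mul_sum]
  rw [Finset.sum_comm]
  exact Finset.sum_congr rfl fun i _ => Finset.sum_congr rfl fun j _ => by ring

lemma dot_star_comm (x ψ : Fin d → ℂ) :
    dotProduct (star x) ψ = star (dotProduct (star ψ) x) := by
  simp only [dotProduct, Pi.star_apply, Complex.star_def, map_sum, _root_.map_mul,
    Complex.conj_conj]
  exact Finset.sum_congr rfl fun i _ => by ring

lemma ketbra_psd (ψ : Fin d → ℂ) : (ketbra ψ).PosSemidef := by
  refine Matrix.PosSemidef.of_dotProduct_mulVec_nonneg (ketbra_herm ψ) fun x => ?_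
  rw [dot_ketbra_mulVec, dot_star_comm]
  exact star_mul_self_nonneg _

lemma ketbra_trace (ψ : Fin d → ℂ) :
    (ketbra ψ).trace = ((∑ i, Complex.normSq (ψ i) : ℝ) : ℂ) := by
  rw [Matrix.trace, Complex.ofReal_sum]
  refine Finset.sum_congr rfl fun i _ => ?_
  simp only [Matrix.diag_apply, ketbra]
  rw [Complex.mul_conj]

lemma ketbra_conj (V : Matrix (Fin d) (Fin d) ℂ) (ψ : Fin d → ℂ) :
    V * ketbra ψ * star V = ketbra (V *ᵥ ψ) := by
  ext i j
  simp only [Matrix.mul_apply, ketbra, Matrix.mulVec, dotProduct,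
    Matrix.star_eq_conjTranspose, Matrix.conjTranspose_apply, Complex.star_def, map_sum,
    _root_.map_mul, Finset.sum_mul, Finset.mul_sum]
  exact Finset.sum_congr rfl fun a _ => Finset.sum_congr rfl fun b _ => by ring

lemma dot_self_eq (x : Fin d → ℂ) :
    dotProduct (star x) x = ((∑ i, Complex.normSq (x i) : ℝ) : ℂ) := by
  simp only [dotProduct, Pi.star_apply]
  rw [Complex.ofReal_sum]
  refine Finset.sum_congr rfl fun i _ => ?_
  rw [Complex.star_def, mul_comm]
  exact Complex.mul_conj _

lemma qf_expand (l : Fin d → ℝ) (φ : Fin d → ℂ) (v : Fin d → ℂ) :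
    (dotProduct (star v)
      ((Matrix.diagonal (fun i => ((l i : ℝ) : ℂ)) + ketbra φ) *ᵥ v)).re
    = ∑ i, l i * Complex.normSq (v i)
      + Complex.normSq (∑ i, (starRingEnd ℂ) (φ i) * v i) := by
  rw [Matrix.add_mulVec, dotProduct_add]
  have h1 : dotProduct (star v) (Matrix.diagonal (fun i => ((l i : ℝ) : ℂ)) *ᵥ v)
      = ((∑ i, l i * Complex.normSq (v i) : ℝ) : ℂ) := by
    simp only [dotProduct, Pi.star_apply]
    rw [Complex.ofReal_sum]
    refine Finset.sum_congr rfl fun i _ => ?_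
    rw [Matrix.mulVec_diagonal, Complex.ofReal_mul, Complex.star_def]
    calc (starRingEnd ℂ) (v i) * (((l i : ℝ) : ℂ) * v i)
        = ((l i : ℝ) : ℂ) * (v i * (starRingEnd ℂ) (v i)) := by ring
      _ = ((l i : ℝ) : ℂ) * ((Complex.normSq (v i) : ℝ) : ℂ) := by rw [Complex.mul_conj]
  have h2 : dotProduct (star v) (ketbra φ *ᵥ v)
      = ((Complex.normSq (∑ i, (starRingEnd ℂ) (φ i) * v i) : ℝ) : ℂ) := by
    rw [dot_ketbra_mulVec, dot_star_comm]
    have : dotProduct (star φ) v = ∑ i, (starRingEnd ℂ) (φ i) * v i := by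
      simp only [dotProduct, Pi.star_apply, Complex.star_def]
    rw [this, Complex.star_def, mul_comm]
    exact Complex.mul_conj _
  rw [h1, h2, Complex.add_re, Complex.ofReal_re, Complex.ofReal_re]


variable {d : ℕ}

lemma per_z (ψ : Fin d → ℂ) (hψn : ∑ i, Complex.normSq (ψ i) = 1)
    (σ0 : Matrix (Fin d) (Fin d) ℂ) (hσ0 : σ0.PosSemidef) (htr : σ0.trace = 1) :
    ∃ (Pp Pn : Matrix (Fin d) (Fin d) ℂ) (μ : ℝ),
      Pp.PosSemidef ∧ Pn.PosSemidef ∧ σ0 - ketbra ψ = Pp - Pn ∧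
      Pp.trace = ((μ : ℝ) : ℂ) ∧ Pn.trace = ((μ : ℝ) : ℂ) ∧
      0 ≤ μ ∧ μ ≤ 1 ∧ μ ≤ Real.sqrt (1 - fid ψ σ0) ∧ fid ψ σ0 ≤ 1 := by
  classical
  have hΔ : (σ0 - ketbra ψ).IsHermitian := hσ0.1.sub (ketbra_herm ψ)
  set U : Matrix (Fin d) (Fin d) ℂ := (hΔ.eigenvectorUnitary : Matrix (Fin d) (Fin d) ℂ)
    with hUdef
  have htrΔ : (σ0 - ketbra ψ).trace = 0 := by
    rw [Matrix.trace_sub, htr, ketbra_trace ψ, hψn]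
    norm_num
  have htrΔ' : (σ0 - ketbra ψ).trace = ((∑ i, hΔ.eigenvalues i : ℝ) : ℂ) := by
    conv_lhs => rw [hΔ.spectral_theorem]
    rw [Unitary.conjStarAlgAut_apply, Matrix.trace_mul_cycle, unit1 hΔ,
      Matrix.one_mul, Matrix.trace_diagonal,
      Complex.ofReal_sum]
    rfl
  have hsuml : ∑ i, hΔ.eigenvalues i = 0 := by
    have h := htrΔ'.symm.trans htrΔ
    exact_mod_cast h
  set φ : Fin d → ℂ := (star U) *ᵥ ψ with hφdef
  have hUU : U * star U = 1 := unit2 hΔ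
  have hUU' : star U * U = 1 := unit1 hΔ
  have hUφ : U *ᵥ φ = ψ := by
    rw [hφdef, Matrix.mulVec_mulVec, hUU, Matrix.one_mulVec]
  have hstarφ : star φ = star ψ ᵥ* U := by
    rw [hφdef, Matrix.star_mulVec]
    congr 1
    rw [Matrix.star_eq_conjTranspose, Matrix.conjTranspose_conjTranspose]
  have hSig : star U * σ0 * U
      = Matrix.diagonal (fun i => ((hΔ.eigenvalues i : ℝ) : ℂ)) + ketbra φ := by
    have h1 : σ0 = (σ0 - ketbra ψ) + ketbra ψ := by rw [sub_add_cancel]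
    conv_lhs => rw [h1]
    rw [Matrix.mul_add, Matrix.add_mul]
    congr 1
    · have h := hΔ.conjStarAlgAut_star_eigenvectorUnitary
      rw [Unitary.conjStarAlgAut_star_apply] at h
      exact h
    · have h := ketbra_conj (star U) ψ
      rw [star_star] at h
      exact h
  have hSigpsd : (star U * σ0 * U).PosSemidef := by
    have h := hσ0.conjTranspose_mul_mul_same U
    simpa [Matrix.star_eq_conjTranspose] using h
  have H : ∀ v : Fin d → ℂ, 0 ≤ ∑ i, hΔ.eigenvalues i * Complex.normSq (v i)
      + Complex.normSq (∑ i, (starRingEnd ℂ) (φ i) * v i) := by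
    intro v
    have h := hSigpsd.re_dotProduct_nonneg v
    rw [hSig] at h
    have h2 := qf_expand hΔ.eigenvalues φ v
    rw [← h2]
    simpa using h
  have hφn : ∑ i, Complex.normSq (φ i) = 1 := by
    have e1 : dotProduct (star φ) φ = dotProduct (star ψ) ψ := by
      rw [hstarφ, ← Matrix.dotProduct_mulVec, hUφ]
    rw [dot_self_eq φ, dot_self_eq ψ, hψn] at e1
    exact_mod_cast e1
  have hfid : fid ψ σ0 = ∑ i, hΔ.eigenvalues i * Complex.normSq (φ i) + 1 := by
    have hfid0 : fid ψ σ0 = (dotProduct (star ψ) (σ0 *ᵥ ψ)).re := by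
      rw [fid]
      congr 1
      simp only [dotProduct, Matrix.mulVec, Pi.star_apply, Complex.star_def,
        Finset.mul_sum]
      exact Finset.sum_congr rfl fun i _ => Finset.sum_congr rfl fun j _ => by ring
    have hmove : dotProduct (star ψ) (σ0 *ᵥ ψ)
        = dotProduct (star φ) ((star U * σ0 * U) *ᵥ φ) := by
      have e1 : (star U * σ0 * U) *ᵥ φ = star U *ᵥ (σ0 *ᵥ ψ) := by
        rw [← Matrix.mulVec_mulVec, hUφ, ← Matrix.mulVec_mulVec]
      conv_rhs => rw [e1, Matrix.dotProduct_mulVec, hstarφ, Matrix.vecMul_vecMul, hUU,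
        Matrix.vecMul_one]
    rw [hfid0, hmove, hSig, qf_expand]
    have ht1 : (∑ i, (starRingEnd ℂ) (φ i) * φ i) = ((1 : ℝ) : ℂ) := by
      have e : (∑ i, (starRingEnd ℂ) (φ i) * φ i) = dotProduct (star φ) φ := by
        simp only [dotProduct, Pi.star_apply, Complex.star_def]
      rw [e, dot_self_eq φ, hφn]
    rw [ht1]
    norm_num
  obtain ⟨h0, h1, h2⟩ := scalar_core hΔ.eigenvalues φ H hφn hsuml
  have hone : ∑ i, (-(hΔ.eigenvalues i)) * Complex.normSq (φ i) = 1 - fid ψ σ0 := by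
    have e : ∑ i, (-(hΔ.eigenvalues i)) * Complex.normSq (φ i)
        = -∑ i, hΔ.eigenvalues i * Complex.normSq (φ i) := by
      rw [← Finset.sum_neg_distrib]
      exact Finset.sum_congr rfl fun i _ => by ring
    rw [e, hfid]
    ring
  obtain ⟨Pp, Pn, hPp, hPn, hdec, htrp, htrn⟩ := decomp_exists hΔ
  have hmax : ∑ i, max (hΔ.eigenvalues i) 0 = ∑ i, max (-(hΔ.eigenvalues i)) 0 := by
    have e : ∑ i, (max (hΔ.eigenvalues i) 0 - max (-(hΔ.eigenvalues i)) 0)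
        = ∑ i, hΔ.eigenvalues i := by
      refine Finset.sum_congr rfl fun i _ => ?_
      rcases le_or_gt 0 (hΔ.eigenvalues i) with h | h
      · rw [max_eq_left h, max_eq_right (neg_nonpos.2 h)]; ring
      · rw [max_eq_right h.le, max_eq_left (neg_nonneg.2 h.le)]; ring
    rw [Finset.sum_sub_distrib, hsuml] at e
    linarith
  refine ⟨Pp, Pn, ∑ i, max (-(hΔ.eigenvalues i)) 0, hPp, hPn, hdec, ?_, htrn, ?_, h1, ?_, ?_⟩
  · rw [htrp, hmax]
  · exact Finset.sum_nonneg fun i _ => le_max_right _ 0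
  · rw [← hone]; exact h2
  · rw [hone] at h0; linarith

noncomputable def kf {d k : ℕ} (M : Fin k → Matrix (Fin d) (Fin d) ℂ) :
    Matrix (Fin k → Fin d) (Fin k → Fin d) ℂ :=
  fun i j => ∏ t, M t (i t) (j t)

lemma kf_conjTranspose {k : ℕ} (M : Fin k → Matrix (Fin d) (Fin d) ℂ) :
    (kf M)ᴴ = kf (fun t => (M t)ᴴ) := by
  ext i j
  simp only [kf, Matrix.conjTranspose_apply, Complex.star_def, map_prod]

lemma kf_mul {k : ℕ} (M N : Fin k → Matrix (Fin d) (Fin d) ℂ) :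
    kf M * kf N = kf (fun t => M t * N t) := by
  ext i j
  rw [Matrix.mul_apply]
  show ∑ l : Fin k → Fin d, (∏ t, M t (i t) (l t)) * ∏ t, N t (l t) (j t)
      = ∏ t, (M t * N t) (i t) (j t)
  simp_rw [Matrix.mul_apply]
  rw [Finset.prod_univ_sum]
  rw [Fintype.piFinset_univ]
  exact Finset.sum_congr rfl fun p _ => (Finset.prod_mul_distrib).symm

lemma kf_trace {k : ℕ} (M : Fin k → Matrix (Fin d) (Fin d) ℂ) :
    (kf M).trace = ∏ t, (M t).trace := by
  simp only [Matrix.trace, Matrix.diag, kf]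
  rw [Finset.prod_univ_sum, Fintype.piFinset_univ]

open scoped MatrixOrder in
lemma kf_psd {k : ℕ} (M : Fin k → Matrix (Fin d) (Fin d) ℂ) (h : ∀ t, (M t).PosSemidef) :
    (kf M).PosSemidef := by
  have e : kf M = (kf fun t => CFC.sqrt (M t))ᴴ * (kf fun t => CFC.sqrt (M t)) := by
    rw [kf_conjTranspose]
    have e1 : (fun t => (CFC.sqrt (M t))ᴴ) = fun t => CFC.sqrt (M t) :=
      funext fun t => (nonneg_iff_posSemidef.1 (CFC.sqrt_nonneg (M t))).1
    rw [e1, kf_mul]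
    have e2 : (fun t => CFC.sqrt (M t) * CFC.sqrt (M t)) = M :=
      funext fun t => CFC.sqrt_mul_sqrt_self _ (nonneg_iff_posSemidef.2 (h t))
    rw [e2]
  rw [e]
  exact Matrix.posSemidef_conjTranspose_mul_self _

lemma prod_sub_prod {ι : Type*} [LinearOrder ι] (S : Finset ι) (f g : ι → ℂ) :
    ∏ s ∈ S, f s - ∏ s ∈ S, g s
      = ∑ t ∈ S, (∏ s ∈ S.filter (· < t), g s) * (f t - g t)
          * (∏ s ∈ S.filter (t < ·), f s) := by
  classical
  induction S using Finset.induction_on_min with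
  | empty => simp
  | insert a s ha ih =>
    have hanotin : a ∉ s := fun h => lt_irrefl a (ha a h)
    rw [Finset.prod_insert hanotin, Finset.prod_insert hanotin, Finset.sum_insert hanotin]
    have e1 : (insert a s).filter (· < a) = ∅ := by
      ext x
      simp only [Finset.mem_filter, Finset.mem_insert, Finset.notMem_empty, iff_false, not_and]
      rintro (rfl | hx)
      · exact lt_irrefl x
      · exact not_lt.2 (ha x hx).le
    have e2 : (insert a s).filter (a < ·) = s := by
      ext x
      simp only [Finset.mem_filter, Finset.mem_insert]
      constructor
      · rintro ⟨rfl | hx, hlt⟩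
        · exact absurd hlt (lt_irrefl _)
        · exact hx
      · intro hx; exact ⟨Or.inr hx, ha x hx⟩
    have e3 : ∀ t ∈ s, (insert a s).filter (· < t) = insert a (s.filter (· < t)) := by
      intro t ht
      rw [Finset.filter_insert, if_pos (ha t ht)]
    have e4 : ∀ t ∈ s, (insert a s).filter (t < ·) = s.filter (t < ·) := by
      intro t ht
      rw [Finset.filter_insert, if_neg (not_lt.2 (ha t ht).le)]
    rw [e1, Finset.prod_empty, one_mul, e2]
    have e5 : ∑ t ∈ s, (∏ s' ∈ (insert a s).filter (· < t), g s') * (f t - g t)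
          * (∏ s' ∈ (insert a s).filter (t < ·), f s')
        = g a * ∑ t ∈ s, (∏ s' ∈ s.filter (· < t), g s') * (f t - g t)
          * (∏ s' ∈ s.filter (t < ·), f s') := by
      rw [Finset.mul_sum]
      refine Finset.sum_congr rfl fun t ht => ?_
      rw [e3 t ht, e4 t ht,
        Finset.prod_insert (fun hmem => hanotin (Finset.mem_of_mem_filter a hmem))]
      ring
    rw [e5, ← ih]
    ring

lemma prod_split {k : ℕ} (t : Fin k) (F : Fin k → ℂ) :
    ∏ s, F s = (∏ s ∈ Finset.univ.filter (· < t), F s) * F t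
      * (∏ s ∈ Finset.univ.filter (t < ·), F s) := by
  classical
  rw [← Finset.prod_filter_mul_prod_filter_not Finset.univ (· < t) F]
  rw [mul_assoc]
  congr 1
  have e : Finset.univ.filter (fun s => ¬ s < t) = insert t (Finset.univ.filter (t < ·)) := by
    ext x
    simp only [Finset.mem_filter, Finset.mem_insert, Finset.mem_univ, true_and, not_lt]
    constructor
    · intro h
      rcases eq_or_lt_of_le h with h' | h'
      · exact Or.inl h'.symm
      · exact Or.inr h'
    · rintro (rfl | h)
      · exact le_refl x
      · exact h.le
  rw [e, Finset.prod_insert (by simp)]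

lemma psd_smul {n : Type*} [Fintype n] [DecidableEq n] {M : Matrix n n ℂ} (hM : M.PosSemidef)
    {c : ℝ} (hc : 0 ≤ c) : (((c : ℝ) : ℂ) • M).PosSemidef := by
  refine Matrix.PosSemidef.of_dotProduct_mulVec_nonneg ?_ ?_
  · ext i j
    have h2 : (starRingEnd ℂ) (M j i) = M i j := by
      have h3 := hM.1.apply i j
      simpa [Matrix.conjTranspose_apply, Complex.star_def] using h3
    simp only [Matrix.conjTranspose_apply, Matrix.smul_apply, smul_eq_mul, Complex.star_def,
      _root_.map_mul, Complex.conj_ofReal]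
    rw [h2]
  · intro x
    rw [Matrix.smul_mulVec, dotProduct_smul, smul_eq_mul]
    exact mul_nonneg (Complex.zero_le_real.2 hc) (hM.dotProduct_mulVec_nonneg x)

lemma psd_sum {n : Type*} [Fintype n] [DecidableEq n] {ι : Type*} (s : Finset ι)
    (f : ι → Matrix n n ℂ) (h : ∀ i ∈ s, (f i).PosSemidef) : (∑ i ∈ s, f i).PosSemidef := by
  classical
  induction s using Finset.induction_on with
  | empty => simpa using Matrix.PosSemidef.zero
  | insert a s hnotin ih =>
    rw [Finset.sum_insert hnotin]
    exact (h a (Finset.mem_insert_self a s)).add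
      (ih fun i hi => h i (Finset.mem_insert_of_mem hi))

end NC

open NC in
/-- Analytic core of the no-cloning theorem (statistical case):
δ-closeness on average yields a trace-distance bound kδ/a + k√a. -/
theorem mixture_kronPow_trace_dist_le_of_avg_fid {d m : ℕ} (ψ : Fin d → ℂ)
    (hψ : ∑ i, ‖ψ i‖ ^ 2 = 1)
    (k : ℕ) (hk : 1 ≤ k) (a : ℝ) (ha : 0 < a) (δ : ℝ)
    (p : Fin m → ℝ) (hp0 : ∀ z, 0 ≤ p z) (hp1 : ∑ z, p z = 1)
    (σ : Fin m → Matrix (Fin d) (Fin d) ℂ)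
    (hσ : ∀ z, (σ z).PosSemidef) (hσtr : ∀ z, (σ z).trace = 1)
    (hδ : ∑ z, p z * (1 - fid ψ (σ z)) ≤ δ) :
    (1 / 2 : ℝ) * traceNorm (∑ z, (p z : ℂ) • kronPow (σ z) k - kronPow (ketbra ψ) k)
      ≤ (k : ℝ) * δ / a + (k : ℝ) * Real.sqrt a := by
  classical
  have hψn : ∑ i, Complex.normSq (ψ i) = 1 := by
    rw [← hψ]
    exact Finset.sum_congr rfl fun i _ => (Complex.sq_norm _).symm
  choose Pp Pn μ hPp hPn hdec htrp htrn hμ0 hμ1 hμs hfid1 using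
    fun z => per_z ψ hψn (σ z) (hσ z) (hσtr z)
  set P : Matrix (Fin d) (Fin d) ℂ := ketbra ψ with hPdef
  set B : Fin m → Fin k → Matrix (Fin k → Fin d) (Fin k → Fin d) ℂ :=
    fun z t => kf (fun s => if s < t then P else if s = t then Pp z else σ z) with hBdef
  set C : Fin m → Fin k → Matrix (Fin k → Fin d) (Fin k → Fin d) ℂ :=
    fun z t => kf (fun s => if s < t then P else if s = t then Pn z else σ z) with hCdef
  -- the telescoping identity per z
  have hstep : ∀ z, kronPow (σ z) k - kronPow P k = ∑ t, (B z t - C z t) := by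
    intro z
    ext i j
    have hps := prod_sub_prod (Finset.univ : Finset (Fin k))
      (fun s => σ z (i s) (j s)) (fun s => P (i s) (j s))
    simp only [Matrix.sub_apply, Matrix.sum_apply, kronPow]
    rw [hps]
    refine Finset.sum_congr rfl fun t _ => ?_
    have hBe : B z t i j = (∏ s ∈ Finset.univ.filter (· < t), P (i s) (j s))
        * (Pp z) (i t) (j t) * (∏ s ∈ Finset.univ.filter (t < ·), σ z (i s) (j s)) := by
      show ∏ s, (if s < t then P else if s = t then Pp z else σ z) (i s) (j s) = _
      rw [prod_split t]
      congr 1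
      · congr 1
        · exact Finset.prod_congr rfl fun s hs => by
            rw [if_pos (Finset.mem_filter.1 hs).2]
        · rw [if_neg (lt_irrefl t), if_pos rfl]
      · refine Finset.prod_congr rfl fun s hs => ?_
        have h1 : t < s := (Finset.mem_filter.1 hs).2
        rw [if_neg (not_lt.2 h1.le), if_neg (ne_of_gt h1)]
    have hCe : C z t i j = (∏ s ∈ Finset.univ.filter (· < t), P (i s) (j s))
        * (Pn z) (i t) (j t) * (∏ s ∈ Finset.univ.filter (t < ·), σ z (i s) (j s)) := by
      show ∏ s, (if s < t then P else if s = t then Pn z else σ z) (i s) (j s) = _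
      rw [prod_split t]
      congr 1
      · congr 1
        · exact Finset.prod_congr rfl fun s hs => by
            rw [if_pos (Finset.mem_filter.1 hs).2]
        · rw [if_neg (lt_irrefl t), if_pos rfl]
      · refine Finset.prod_congr rfl fun s hs => ?_
        have h1 : t < s := (Finset.mem_filter.1 hs).2
        rw [if_neg (not_lt.2 h1.le), if_neg (ne_of_gt h1)]
    rw [hBe, hCe]
    have hde : σ z (i t) (j t) - P (i t) (j t) = Pp z (i t) (j t) - Pn z (i t) (j t) := by
      have h1 := congrFun (congrFun (hdec z) (i t)) (j t)
      simpa [Matrix.sub_apply] using h1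
    rw [hde]
    ring
  have hsum1 : ∑ z, (p z : ℂ) • kronPow P k = kronPow P k := by
    rw [← Finset.sum_smul]
    have h1 : (∑ z, (p z : ℂ)) = 1 := by
      rw [← Complex.ofReal_sum, hp1, Complex.ofReal_one]
    rw [h1, one_smul]
  have hkey : ∑ z, (p z : ℂ) • kronPow (σ z) k - kronPow P k
      = (∑ z, ∑ t, (p z : ℂ) • B z t) - (∑ z, ∑ t, (p z : ℂ) • C z t) := by
    conv_lhs => rw [← hsum1]
    rw [← Finset.sum_sub_distrib]
    rw [← Finset.sum_sub_distrib]
    refine Finset.sum_congr rfl fun z _ => ?_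
    rw [← smul_sub, hstep z, Finset.smul_sum, ← Finset.sum_sub_distrib]
    refine Finset.sum_congr rfl fun t _ => ?_
    rw [smul_sub]
  have hslotB : ∀ z t, (B z t).PosSemidef := by
    intro z t
    refine kf_psd _ fun s => ?_
    split_ifs
    · exact ketbra_psd ψ
    · exact hPp z
    · exact hσ z
  have hslotC : ∀ z t, (C z t).PosSemidef := by
    intro z t
    refine kf_psd _ fun s => ?_
    split_ifs
    · exact ketbra_psd ψ
    · exact hPn z
    · exact hσ z
  have hBpsd : (∑ z, ∑ t, (p z : ℂ) • B z t).PosSemidef :=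
    psd_sum _ _ fun z _ => psd_sum _ _ fun t _ => psd_smul (hslotB z t) (hp0 z)
  have hCpsd : (∑ z, ∑ t, (p z : ℂ) • C z t).PosSemidef :=
    psd_sum _ _ fun z _ => psd_sum _ _ fun t _ => psd_smul (hslotC z t) (hp0 z)
  have hPtr : P.trace = 1 := by
    rw [hPdef, ketbra_trace ψ, hψn, Complex.ofReal_one]
  have htrB : ∀ z t, (B z t).trace = ((μ z : ℝ) : ℂ) := by
    intro z t
    show (kf _).trace = _
    rw [kf_trace]
    rw [Finset.prod_eq_single t]
    · rw [if_neg (lt_irrefl t), if_pos rfl]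
      exact htrp z
    · intro s _ hs
      by_cases hlt : s < t
      · rw [if_pos hlt]; exact hPtr
      · rw [if_neg hlt, if_neg hs]; exact hσtr z
    · intro h; exact absurd (Finset.mem_univ t) h
  have htrC : ∀ z t, (C z t).trace = ((μ z : ℝ) : ℂ) := by
    intro z t
    show (kf _).trace = _
    rw [kf_trace]
    rw [Finset.prod_eq_single t]
    · rw [if_neg (lt_irrefl t), if_pos rfl]
      exact htrn z
    · intro s _ hs
      by_cases hlt : s < t
      · rw [if_pos hlt]; exact hPtr
      · rw [if_neg hlt, if_neg hs]; exact hσtr z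
    · intro h; exact absurd (Finset.mem_univ t) h
  have htot : ∀ (D : Fin m → Fin k → Matrix (Fin k → Fin d) (Fin k → Fin d) ℂ),
      (∀ z t, (D z t).trace = ((μ z : ℝ) : ℂ)) →
      ((∑ z, ∑ t, (p z : ℂ) • D z t).trace).re = ∑ z, p z * ((k : ℝ) * μ z) := by
    intro D hD
    have e1 : (∑ z, ∑ t, (p z : ℂ) • D z t).trace
        = ((∑ z, p z * ((k : ℝ) * μ z) : ℝ) : ℂ) := by
      rw [Matrix.trace_sum, Complex.ofReal_sum]
      refine Finset.sum_congr rfl fun z _ => ?_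
      rw [Matrix.trace_sum]
      have e2 : ∀ t : Fin k, ((p z : ℂ) • D z t).trace = (p z : ℂ) * ((μ z : ℝ) : ℂ) := by
        intro t
        rw [Matrix.trace_smul, hD z t, smul_eq_mul]
      rw [Finset.sum_congr rfl fun t _ => e2 t]
      rw [Finset.sum_const, Finset.card_univ, Fintype.card_fin, nsmul_eq_mul]
      push_cast
      ring
    rw [e1, Complex.ofReal_re]
  have hmain := traceNorm_sub_le hBpsd hCpsd
  have hbz : ∀ z, μ z ≤ (1 - fid ψ (σ z)) / a + Real.sqrt a := by
    intro z
    rcases le_or_gt a (1 - fid ψ (σ z)) with hcase | hcase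
    · have h1 : (1 : ℝ) ≤ (1 - fid ψ (σ z)) / a := (one_le_div ha).2 hcase
      have h2 := hμ1 z
      have h3 := Real.sqrt_nonneg a
      linarith
    · have h1 : μ z ≤ Real.sqrt a := (hμs z).trans (Real.sqrt_le_sqrt hcase.le)
      have h2 : 0 ≤ (1 - fid ψ (σ z)) / a := div_nonneg (by linarith [hfid1 z]) ha.le
      linarith
  calc (1 / 2 : ℝ) * traceNorm (∑ z, (p z : ℂ) • kronPow (σ z) k - kronPow P k)
      = (1 / 2 : ℝ) * traceNorm ((∑ z, ∑ t, (p z : ℂ) • B z t)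
          - (∑ z, ∑ t, (p z : ℂ) • C z t)) := by rw [hkey]
    _ ≤ (1 / 2 : ℝ) * (((∑ z, ∑ t, (p z : ℂ) • B z t).trace).re
          + ((∑ z, ∑ t, (p z : ℂ) • C z t).trace).re) := by
        have h2 : (0 : ℝ) ≤ 1 / 2 := by norm_num
        exact mul_le_mul_of_nonneg_left hmain h2
    _ = ∑ z, p z * ((k : ℝ) * μ z) := by
        rw [htot B htrB, htot C htrC]; ring
    _ ≤ ∑ z, p z * ((k : ℝ) * ((1 - fid ψ (σ z)) / a + Real.sqrt a)) := by
        refine Finset.sum_le_sum fun z _ => ?_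
        refine mul_le_mul_of_nonneg_left ?_ (hp0 z)
        refine mul_le_mul_of_nonneg_left (hbz z) (by positivity)
    _ = ((k : ℝ) / a) * (∑ z, p z * (1 - fid ψ (σ z))) + (k : ℝ) * Real.sqrt a := by
        rw [Finset.mul_sum]
        have e : ∀ z ∈ Finset.univ, p z * ((k : ℝ) * ((1 - fid ψ (σ z)) / a + Real.sqrt a))
            = (k : ℝ) / a * (p z * (1 - fid ψ (σ z))) + ((k : ℝ) * Real.sqrt a) * p z := by
          intro z _
          field_simp
        rw [Finset.sum_congr rfl e, Finset.sum_add_distrib, ← Finset.mul_sum, ← Finset.mul_sum, hp1, mul_one]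
    _ ≤ (k : ℝ) * δ / a + (k : ℝ) * Real.sqrt a := by
        have h1 : ((k : ℝ) / a) * (∑ z, p z * (1 - fid ψ (σ z))) ≤ ((k : ℝ) / a) * δ :=
          mul_le_mul_of_nonneg_left hδ (div_nonneg (Nat.cast_nonneg k) ha.le)
        have h2 : ((k : ℝ) / a) * δ = (k : ℝ) * δ / a := by ring
        linarith
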